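/- Let τ be a correct compositional translation from SYNCSIMPLE to LOCKSIMPLE_{k,IS} with k ≥ 2. Then for every index i with 1 ≤ i ≤ k, the total number of occurrences of P_i in τ(!) and τ(?) together is at most the total number of occurrences of T_i in τ(!) and τ(?) together. -/

import Mathlib

/-- Symbols of SYNCSIMPLE: `!` (bang) and `?` (ques). -/
inductive SSym | bang | ques
deriving DecidableEq

/-- A SYNCSIMPLE subprocess: a string over {!,?} ending with `0` (false) or `✓` (true). -/
abbrev SSub := List SSym × Bool

/-- A SYNCSIMPLE process: a multiset of subprocesses. -/
abbrev SProc := Multiset SSub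

/-- The SYS reduction: a leading `!` and a leading `?` of two subprocesses are consumed. -/
def SysStep (P Q : SProc) : Prop :=
  ∃ (u1 u2 : List SSym) (b1 b2 : Bool) (R : SProc),
    P = (SSym.bang :: u1, b1) ::ₘ (SSym.ques :: u2, b2) ::ₘ R ∧
    Q = (u1, b1) ::ₘ (u2, b2) ::ₘ R

/-- A process is successful if it contains the subprocess `✓`. -/
def SSuccessful (P : SProc) : Prop := (([], true) : SSub) ∈ P

def SMayConv (P : SProc) : Prop :=
  ∃ Q, Relation.ReflTransGen SysStep P Q ∧ SSuccessful Q

def SMustConv (P : SProc) : Prop :=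
  ∀ Q, Relation.ReflTransGen SysStep P Q → SMayConv Q

/-- Lock operations: put `P_i` and take `T_i`. -/
inductive LOp | put | take
deriving DecidableEq

abbrev LSym (k : ℕ) := LOp × Fin k
abbrev LSub (k : ℕ) := List (LSym k) × Bool
abbrev LProc (k : ℕ) := Multiset (LSub k)
/-- The store of `k` locks: `true` = full (■), `false` = empty (□). -/
abbrev Store (k : ℕ) := Fin k → Bool

/-- LOCKSIMPLE step: `P_i` fills an empty lock `i` (blocks if full);
    `T_i` empties lock `i` and never blocks. -/
def LockStep {k : ℕ} : (LProc k × Store k) → (LProc k × Store k) → Prop :=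
  fun s t => ∃ (i : Fin k) (u : List (LSym k)) (b : Bool) (R : LProc k),
    ((s.1 = ((LOp.put, i) :: u, b) ::ₘ R ∧ s.2 i = false ∧
      t.1 = (u, b) ::ₘ R ∧ t.2 = Function.update s.2 i true) ∨
     (s.1 = ((LOp.take, i) :: u, b) ::ₘ R ∧
      t.1 = (u, b) ::ₘ R ∧ t.2 = Function.update s.2 i false))

def LSuccessful {k : ℕ} (s : LProc k × Store k) : Prop := (([], true) : LSub k) ∈ s.1

def LMayConv {k : ℕ} (s : LProc k × Store k) : Prop :=
  ∃ t, Relation.ReflTransGen LockStep s t ∧ LSuccessful t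

def LMustConv {k : ℕ} (s : LProc k × Store k) : Prop :=
  ∀ t, Relation.ReflTransGen LockStep s t → LMayConv t

/-- The compositional translation determined by the strings `tb = τ(!)` and `tq = τ(?)`,
    applied to a subprocess. -/
def transSub {k : ℕ} (tb tq : List (LSym k)) (u : SSub) : LSub k :=
  (u.1.flatMap (fun c => match c with | SSym.bang => tb | SSym.ques => tq), u.2)

/-- The compositional translation applied to a process. -/
def transProc {k : ℕ} (tb tq : List (LSym k)) (P : SProc) : LProc k :=
  P.map (transSub tb tq)

/-- Correctness of the compositional translation `(tb, tq)` with initial store `IS`: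
    may- and must-convergence are preserved and reflected. -/
def Correct {k : ℕ} (IS : Store k) (tb tq : List (LSym k)) : Prop :=
  ∀ P : SProc,
    (SMayConv P ↔ LMayConv (transProc tb tq P, IS)) ∧
    (SMustConv P ↔ LMustConv (transProc tb tq P, IS))

/-- The solo execution of the string `s` from store `IS` reaches the point where
    `(put, i) :: rest` remains and deadlocks there since lock `i` is full. -/
def SoloBlocked {k : ℕ} (IS : Store k) (s : List (LSym k)) (i : Fin k)
    (rest : List (LSym k)) : Prop :=
  ∃ C : Store k,
    Relation.ReflTransGen LockStep (({(s, false)} : LProc k), IS)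
      (({((LOp.put, i) :: rest, false)} : LProc k), C) ∧
    C i = true

/-- Blocking type `P_i`: the blocking prefix is `R P_i` with `R` free of `P_i, T_i`. -/
def BlockingTypeP {k : ℕ} (IS : Store k) (s : List (LSym k)) (i : Fin k) : Prop :=
  ∃ r rest, s = r ++ (LOp.put, i) :: rest ∧ (∀ x ∈ r, x.2 ≠ i) ∧
    SoloBlocked IS s i rest

/-- Blocking type `P_i P_i`: the blocking prefix is `R₁ P_i R₂ P_i` with
    `R₂` free of `P_i, T_i`, deadlocking exactly before the last `P_i`. -/
def BlockingTypePP {k : ℕ} (IS : Store k) (s : List (LSym k)) (i : Fin k) : Prop :=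
  ∃ r1 r2 rest, s = r1 ++ (LOp.put, i) :: r2 ++ (LOp.put, i) :: rest ∧
    (∀ x ∈ r2, x.2 ≠ i) ∧ SoloBlocked IS s i rest
namespace PutsLeTakes

variable {k : ℕ}

/-- `n`-fold concatenation of a list with itself. -/
def nmul : ℕ → List (LSym k) → List (LSym k)
  | 0, _ => []
  | n+1, l => l ++ nmul n l

@[simp] lemma nmul_zero (l : List (LSym k)) : nmul 0 l = [] := rfl
@[simp] lemma nmul_succ (n : ℕ) (l : List (LSym k)) : nmul (n+1) l = l ++ nmul n l := rfl

lemma nmul_nil (n : ℕ) : nmul n ([] : List (LSym k)) = [] := by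
  induction n with
  | zero => rfl
  | succ n ih => simp [ih]

/-- `puts minus takes` on lock `i` in a string. -/
def D (i : Fin k) (l : List (LSym k)) : ℤ :=
  (l.count (LOp.put, i) : ℤ) - (l.count (LOp.take, i) : ℤ)

lemma D_append (i : Fin k) (l1 l2 : List (LSym k)) :
    D i (l1 ++ l2) = D i l1 + D i l2 := by
  simp [D, List.count_append]; ring

lemma D_nmul (i : Fin k) (n : ℕ) (l : List (LSym k)) :
    D i (nmul n l) = n * D i l := by
  induction n with
  | zero => simp [D]
  | succ n ih => simp [D_append, ih]; ring

lemma D_le_length (i : Fin k) (l : List (LSym k)) : D i l ≤ (l.length : ℤ) := by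
  have h1 : l.count (LOp.put, i) ≤ l.length := List.count_le_length
  have h2 : (0 : ℤ) ≤ (l.count (LOp.take, i) : ℤ) := Int.ofNat_nonneg _
  have := (Nat.cast_le (α := ℤ)).mpr h1
  simp only [D]; omega

/-- Slack from the store: 1 if lock `i` is empty, else 0. -/
def cst (i : Fin k) (S : Store k) : ℤ := if S i then 0 else 1

lemma cst_nonneg (i : Fin k) (S : Store k) : 0 ≤ cst i S := by
  unfold cst; split <;> norm_num

lemma cst_le_one (i : Fin k) (S : Store k) : cst i S ≤ 1 := by
  unfold cst; split <;> norm_num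

/-- `D` summed over a whole process. -/
def W (i : Fin k) (M : LProc k) : ℤ := (M.map (fun u => D i u.1)).sum

@[simp] lemma W_cons (i : Fin k) (a : LSub k) (M : LProc k) :
    W i (a ::ₘ M) = D i a.1 + W i M := by
  simp [W]

lemma D_cons_put (i j : Fin k) (u : List (LSym k)) :
    D i ((LOp.put, j) :: u) = D i u + if j = i then 1 else 0 := by
  simp only [D, List.count_cons, beq_iff_eq, Prod.mk.injEq]
  by_cases hj : j = i <;> simp [hj] <;> push_cast <;> ring

lemma D_cons_take (i j : Fin k) (u : List (LSym k)) :
    D i ((LOp.take, j) :: u) = D i u - if j = i then 1 else 0 := by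
  simp only [D, List.count_cons, beq_iff_eq, Prod.mk.injEq]
  by_cases hj : j = i <;> simp [hj] <;> push_cast <;> ring

/-- Key monotonicity: `W - cst` is nondecreasing along a lock step. -/
lemma W_step (i : Fin k) {s t : LProc k × Store k} (h : LockStep s t) :
    W i s.1 - cst i s.2 <= W i t.1 - cst i t.2 := by
  obtain ⟨j, u, b, R, h | h⟩ := h
  · -- put step
    obtain ⟨hs1, hse, ht1, ht2⟩ := h
    rw [hs1, ht1, W_cons, W_cons, D_cons_put]
    rcases eq_or_ne i j with rfl | hij
    · have e2 : cst i s.2 = 1 := by simp [cst, hse]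
      have e3 : cst i t.2 = 0 := by simp [cst, ht2]
      simp [e2, e3]
      linarith
    · have e3 : cst i t.2 = cst i s.2 := by
        rw [ht2]; unfold cst
        rw [Function.update_of_ne hij]
      simp only [if_neg (Ne.symm hij), e3]
      linarith
  · -- take step
    obtain ⟨hs1, ht1, ht2⟩ := h
    rw [hs1, ht1, W_cons, W_cons, D_cons_take]
    rcases eq_or_ne i j with rfl | hij
    · have e3 : cst i t.2 = 1 := by simp [cst, ht2]
      have h0 := cst_nonneg i s.2
      simp [e3]
      linarith
    · have e3 : cst i t.2 = cst i s.2 := by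
        rw [ht2]; unfold cst
        rw [Function.update_of_ne hij]
      simp only [if_neg (Ne.symm hij), e3]
      linarith

lemma W_rtg (i : Fin k) {s t : LProc k × Store k}
    (h : Relation.ReflTransGen LockStep s t) :
    W i s.1 - cst i s.2 ≤ W i t.1 - cst i t.2 := by
  induction h with
  | refl => exact le_refl _
  | tail _ hstep ih => exact le_trans ih (W_step i hstep)

/-- Shape invariant for executions of `(B, true) | (nmul n t, false)`. -/
def Shape (t : List (LSym k)) (n : ℕ) (s : LProc k × Store k) : Prop :=
  ∃ (B w : List (LSym k)) (m : ℕ),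
    s.1 = (B, true) ::ₘ {(w ++ nmul m t, false)} ∧ w <:+ t ∧ m ≤ n

lemma suffix_of_cons_suffix {y : LSym k} {w t : List (LSym k)} (h : (y :: w) <:+ t) :
    w <:+ t := by
  obtain ⟨p, hp⟩ := h
  exact ⟨p ++ [y], by simpa using hp⟩

lemma drop_head {t w u : List (LSym k)} {m : ℕ} {x : LSym k}
    (hw : w <:+ t) (h : w ++ nmul m t = x :: u) :
    ∃ (w' : List (LSym k)) (m' : ℕ), u = w' ++ nmul m' t ∧ w' <:+ t ∧ m' ≤ m := by
  cases w with
  | cons y w'' =>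
    rw [List.cons_append] at h
    injection h with h1 h2
    exact ⟨w'', m, h2.symm, suffix_of_cons_suffix hw, le_rfl⟩
  | nil =>
    simp only [List.nil_append] at h
    cases m with
    | zero => simp at h
    | succ m' =>
      rw [nmul_succ] at h
      cases t with
      | nil => rw [nmul_nil] at h; simp at h
      | cons y t' =>
        simp only [List.cons_append] at h
        injection h with h1 h2
        exact ⟨t', m', h2.symm, ⟨[y], rfl⟩, Nat.le_succ m'⟩

lemma lockStep_shape {s s' : LProc k × Store k} (h : LockStep s s') :
    ∃ (x : LSym k) (u : List (LSym k)) (b : Bool) (R : LProc k),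
      s.1 = (x :: u, b) ::ₘ R ∧ s'.1 = (u, b) ::ₘ R := by
  obtain ⟨j, u, b, R, ⟨ha, _, hb, _⟩ | ⟨ha, hb, _⟩⟩ := h
  · exact ⟨(LOp.put, j), u, b, R, ha, hb⟩
  · exact ⟨(LOp.take, j), u, b, R, ha, hb⟩

lemma shape_step {t : List (LSym k)} {n : ℕ} {s s' : LProc k × Store k}
    (hsh : Shape t n s) (hst : LockStep s s') : Shape t n s' := by
  obtain ⟨B, w, m, h1, hw, hm⟩ := hsh
  obtain ⟨x, u, b, R, ha, hb⟩ := lockStep_shape hst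
  rw [h1] at ha
  rcases Multiset.cons_eq_cons.mp ha.symm with ⟨he, hR⟩ | ⟨hne, cs, hcs1, hcs2⟩
  · -- the consumed element is the `true` one
    injection he with he1 he2
    exact ⟨u, w, m, by rw [hb, ← hR, ← he2], hw, hm⟩
  · -- the consumed element is the `false` one
    rw [Multiset.singleton_eq_cons_iff] at hcs2
    obtain ⟨he, rfl⟩ := hcs2
    injection he.symm with he1 he2
    obtain ⟨w', m', hu, hw', hm'⟩ := drop_head hw he1.symm
    refine ⟨B, w', m', ?_, hw', le_trans hm' hm⟩
    rw [hb, hcs1, hu, he2]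
    exact Multiset.cons_swap _ _ 0

lemma shape_rtg {t : List (LSym k)} {n : ℕ} {s s' : LProc k × Store k}
    (h : Relation.ReflTransGen LockStep s s') (hsh : Shape t n s) : Shape t n s' := by
  induction h with
  | refl => exact hsh
  | tail _ hstep ih => exact shape_step ih hstep

/-- Main counting consequence of may-convergence of `(nmul n sA, ✓) | (nmul n sB, 0)`. -/
lemma key (IS : Store k) (i : Fin k) (sA sB : List (LSym k)) (n : ℕ)
    (hmay : LMayConv ((nmul n sA, true) ::ₘ {(nmul n sB, false)}, IS)) :
    ∃ (w : List (LSym k)) (m : ℕ), w <:+ sB ∧ m ≤ n ∧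
      (n : ℤ) * (D i sA + D i sB) ≤ D i w + (m : ℤ) * D i sB + 1 := by
  obtain ⟨t, hrtg, hsucc⟩ := hmay
  have hsh0 : Shape sB n ((nmul n sA, true) ::ₘ {(nmul n sB, false)}, IS) :=
    ⟨nmul n sA, [], n, by simp, List.nil_suffix, le_refl n⟩
  obtain ⟨B, w, m, ht1, hw, hm⟩ := shape_rtg hrtg hsh0
  have hB : B = [] := by
    have := hsucc
    unfold LSuccessful at this
    rw [ht1] at this
    rcases Multiset.mem_cons.mp this with h | h
    · injection h with h1 h2; exact h1.symm
    · rw [Multiset.mem_singleton] at h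
      exact absurd (congrArg Prod.snd h) (by simp)
  have hmono := W_rtg i hrtg
  rw [ht1, hB] at hmono
  have hW0 : W i ((nmul n sA, true) ::ₘ {(nmul n sB, false)} : LProc k)
      = (n : ℤ) * D i sA + (n : ℤ) * D i sB := by
    simp [W, D_nmul]
  have hW1 : W i ((([], true) : LSub k) ::ₘ {(w ++ nmul m sB, false)})
      = D i w + (m : ℤ) * D i sB := by
    have hD0 : D i ([] : List (LSym k)) = 0 := by simp [D]
    simp [W, hD0, D_append, D_nmul]
  have h0 := cst_le_one i IS
  have h1 := cst_nonneg i t.2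
  refine ⟨w, m, hw, hm, ?_⟩
  simp only [hW0, hW1] at hmono
  have he : (n:ℤ) * (D i sA + D i sB) = (n:ℤ) * D i sA + (n:ℤ) * D i sB := by ring
  linarith
/-- The SYNCSIMPLE process `!ⁿ | ?ⁿ` reduces to `ε | ε`. -/
lemma sys_run (n : ℕ) (b1 b2 : Bool) :
    Relation.ReflTransGen SysStep
      ((List.replicate n SSym.bang, b1) ::ₘ {(List.replicate n SSym.ques, b2)})
      ((([], b1) : SSub) ::ₘ {([], b2)}) := by
  induction n with
  | zero => exact Relation.ReflTransGen.refl
  | succ n ih =>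
    refine Relation.ReflTransGen.head ?_ ih
    exact ⟨List.replicate n SSym.bang, List.replicate n SSym.ques, b1, b2, 0,
      by simp [List.replicate_succ], by simp⟩

lemma smay1 (n : ℕ) :
    SMayConv ((List.replicate n SSym.bang, true) ::ₘ {(List.replicate n SSym.ques, false)}) :=
  ⟨_, sys_run n true false, Multiset.mem_cons_self _ _⟩

lemma smay2 (n : ℕ) :
    SMayConv ((List.replicate n SSym.ques, true) ::ₘ {(List.replicate n SSym.bang, false)}) := by
  refine ⟨(([], false) : SSub) ::ₘ {([], true)}, ?_, ?_⟩
  · have h := sys_run n false true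
    have he : ((List.replicate n SSym.bang, false) : SSub) ::ₘ {(List.replicate n SSym.ques, true)}
        = (List.replicate n SSym.ques, true) ::ₘ {(List.replicate n SSym.bang, false)} := by
      rw [← Multiset.cons_zero, ← Multiset.cons_zero, Multiset.cons_swap]
    rwa [he] at h
  · exact Multiset.mem_cons.mpr (Or.inr (Multiset.mem_singleton.mpr rfl))

lemma flatMap_replicate (f : SSym → List (LSym k)) (a : SSym) (n : ℕ) :
    (List.replicate n a).flatMap f = nmul n (f a) := by
  induction n with
  | zero => simp
  | succ n ih => simp [List.replicate_succ, ih]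

lemma trans_eq (tb tq : List (LSym k)) (n : ℕ) (b1 b2 : Bool) :
    transProc tb tq
      ((List.replicate n SSym.bang, b1) ::ₘ {(List.replicate n SSym.ques, b2)})
      = ((nmul n tb, b1) : LSub k) ::ₘ {(nmul n tq, b2)} := by
  simp only [transProc, Multiset.map_cons, Multiset.map_singleton, transSub]
  rw [flatMap_replicate, flatMap_replicate]

lemma trans_eq' (tb tq : List (LSym k)) (n : ℕ) (b1 b2 : Bool) :
    transProc tb tq
      ((List.replicate n SSym.ques, b1) ::ₘ {(List.replicate n SSym.bang, b2)})
      = ((nmul n tq, b1) : LSub k) ::ₘ {(nmul n tb, b2)} := by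
  simp only [transProc, Multiset.map_cons, Multiset.map_singleton, transSub]
  rw [flatMap_replicate, flatMap_replicate]

end PutsLeTakes

open PutsLeTakes

/-- for a correct compositional translation with `k ≥ 2` locks,
for each lock `i` the number of `P_i` in `τ(!)` and `τ(?)` together is at most
the number of `T_i` in `τ(!)` and `τ(?)` together. -/
theorem puts_le_takes :
    ∀ (k : ℕ), 2 ≤ k → ∀ (IS : Store k) (tb tq : List (LSym k)),
      Correct IS tb tq →
      ∀ i : Fin k,
        (tb ++ tq).count (LOp.put, i) ≤ (tb ++ tq).count (LOp.take, i) := by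
  intro k hk IS tb tq hc i
  by_contra hcon
  push_neg at hcon
  rw [List.count_append, List.count_append] at hcon
  have hd : 1 ≤ D i tb + D i tq := by
    unfold D; push_cast; omega
  set n : ℕ := tb.length + tq.length + 2 with hn
  have hnz : (n : ℤ) = (tb.length : ℤ) + (tq.length : ℤ) + 2 := by
    rw [hn]; push_cast; ring
  have hmay1 : LMayConv (((nmul n tb, true) : LSub k) ::ₘ {(nmul n tq, false)}, IS) := by
    have := (hc _).1.mp (smay1 n)
    rwa [trans_eq] at this
  have hmay2 : LMayConv (((nmul n tq, true) : LSub k) ::ₘ {(nmul n tb, false)}, IS) := by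
    have := (hc _).1.mp (smay2 n)
    rwa [trans_eq'] at this
  rcases le_or_gt (D i tq) 0 with hb | hb
  · obtain ⟨w, m, hw, hm, hineq⟩ := key IS i tb tq n hmay1
    have h1 : D i w ≤ (w.length : ℤ) := D_le_length i w
    have h2 : (w.length : ℤ) ≤ (tq.length : ℤ) := by exact_mod_cast hw.length_le
    have h3 : (m : ℤ) * D i tq ≤ 0 :=
      mul_nonpos_of_nonneg_of_nonpos (Int.ofNat_nonneg m) hb
    have h4 : (n : ℤ) ≤ (n : ℤ) * (D i tb + D i tq) :=
      le_mul_of_one_le_right (Int.ofNat_nonneg n) hd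
    have hl : (0:ℤ) ≤ (tb.length : ℤ) := Int.ofNat_nonneg _
    linarith
  · obtain ⟨w, m, hw, hm, hineq⟩ := key IS i tq tb n hmay2
    have h1 : D i w ≤ (w.length : ℤ) := D_le_length i w
    have h2 : (w.length : ℤ) ≤ (tb.length : ℤ) := by exact_mod_cast hw.length_le
    have hexp : (n : ℤ) * (D i tq + D i tb) = (n : ℤ) * D i tq + (n : ℤ) * D i tb := by
      ring
    have hl : (0:ℤ) ≤ (tq.length : ℤ) := Int.ofNat_nonneg _
    rcases le_or_gt (D i tb) 0 with hbb | hbb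
    · have h3 : (m : ℤ) * D i tb ≤ 0 :=
        mul_nonpos_of_nonneg_of_nonpos (Int.ofNat_nonneg m) hbb
      have h4 : (n : ℤ) ≤ (n : ℤ) * (D i tq + D i tb) :=
        le_mul_of_one_le_right (Int.ofNat_nonneg n) (by linarith)
      linarith
    · have h3 : (m : ℤ) * D i tb ≤ (n : ℤ) * D i tb :=
        mul_le_mul_of_nonneg_right (by exact_mod_cast hm) (le_of_lt hbb)
      have h5 : (n : ℤ) ≤ (n : ℤ) * D i tq :=
        le_mul_of_one_le_right (Int.ofNat_nonneg n) hb
      linarith
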